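/- Let (H,E) be a normal simplicial semigroup satisfying the CM condition, and let {a_1,…,a_s} be the (finite) set of minimal generators of ω_H, i.e., those a ∈ ω_H with a − h ∉ ω_H for every nonzero h ∈ H. Then (H,E) has an AG witness (equivalently, H is an AG semigroup) if and only if there exists 1 ≤ i ≤ s such that for every j ≠ i, 1 ≤ j ≤ s, there exist 1 ≤ j' ≤ s and b ∈ E satisfying a_j + a_{j'} = a_i + Σ_{h ∈ E\{b}} h; in that case a_i is an Ulrich element of H. In particular, when the rank of H is 2 the condition reads: a_j + a_{j'} = a_i + b for some j' and some b ∈ E. -/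

import Mathlib

open scoped Classical

namespace AGpaper

/-- `(H, E)` is a simplicial semigroup of rank `d` with extreme rays `b : Fin d → ℤ^N`. -/
def IsSimplicial (N d : ℕ) (H : AddSubmonoid (Fin N → ℤ)) (b : Fin d → (Fin N → ℤ)) : Prop :=
  H.FG ∧ (∀ i, b i ∈ H) ∧
  LinearIndependent ℚ (fun i : Fin d => (fun j : Fin N => ((b i j : ℚ)))) ∧
  (∃ n : ℕ, 0 < n ∧ ∀ x ∈ H, ∃ c : Fin d → ℕ, (n : ℤ) • x = ∑ i, (c i : ℤ) • b i)

/-- The Apéry set w.r.t. a general family of extreme rays. -/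
def aperyG {N d : ℕ} (H : AddSubmonoid (Fin N → ℤ)) (b : Fin d → (Fin N → ℤ)) :
    Set (Fin N → ℤ) :=
  {x | x ∈ H ∧ ∀ i : Fin d, x - b i ∉ H}

/-- The socle w.r.t. a general family of extreme rays. -/
def socG {N d : ℕ} (H : AddSubmonoid (Fin N → ℤ)) (b : Fin d → (Fin N → ℤ)) :
    Set (Fin N → ℤ) :=
  {x | x ∈ aperyG H b ∧ ∀ y ∈ aperyG H b, y - x ∈ H → x = y}

/-- The CM condition w.r.t. a general family of extreme rays. -/
def CMG {N d : ℕ} (H : AddSubmonoid (Fin N → ℤ)) (b : Fin d → (Fin N → ℤ)) : Prop :=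
  ∀ g ∈ AddSubgroup.closure (H : Set (Fin N → ℤ)),
    ∃! a, a ∈ aperyG H b ∧ ∃ c : Fin d → ℤ, g - a = ∑ i, c i • b i

/-- Normality of a submonoid of `ℤ^N`. -/
def IsNormalSg (N : ℕ) (H : AddSubmonoid (Fin N → ℤ)) : Prop :=
  ∀ g ∈ AddSubgroup.closure (H : Set (Fin N → ℤ)),
    (∃ n : ℕ, 1 ≤ n ∧ n • g ∈ H) → g ∈ H

/-- `ω_H = {-w + Σ_{b ∈ E} b + h : w ∈ Soc(H,E), h ∈ H}`. -/
def omegaG {N d : ℕ} (H : AddSubmonoid (Fin N → ℤ)) (b : Fin d → (Fin N → ℤ)) :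
    Set (Fin N → ℤ) :=
  {x | ∃ w ∈ socG H b, ∃ h ∈ H, x = -w + (∑ i, b i) + h}

/-- `x` is a minimal generator of `ω_H`: `x ∈ ω_H` and `x - h ∉ ω_H` for every
nonzero `h ∈ H`. -/
def minGenG {N d : ℕ} (H : AddSubmonoid (Fin N → ℤ)) (b : Fin d → (Fin N → ℤ))
    (x : Fin N → ℤ) : Prop :=
  x ∈ omegaG H b ∧ ∀ h ∈ H, h ≠ 0 → x - h ∉ omegaG H b

/-- An AG witness w.r.t. a general family of extreme rays. -/
def AGwitnessG {N d : ℕ} (H : AddSubmonoid (Fin N → ℤ)) (b : Fin d → (Fin N → ℤ))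
    (w : Fin N → ℤ) : Prop :=
  w ∈ socG H b ∧
  (∀ h ∈ aperyG H b, ((h ∈ socG H b ∧ h ≠ w) ↔ w - h ∉ H)) ∧
  (∀ h ∈ socG H b, h ≠ w → ∃ i : Fin d, ∃ h' ∈ socG H b, h + h' = w + b i)

section Infra
variable {N d : ℕ}

def qc : (Fin N → ℤ) →+ (Fin N → ℚ) :=
  AddMonoidHom.mk' (fun x j => (x j : ℚ)) (by
    intro x y; funext j
    simp [Pi.add_apply])

lemma qc_apply (x : Fin N → ℤ) (j : Fin N) : qc x j = (x j : ℚ) := rfl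

lemma qc_inj : Function.Injective (qc (N := N)) := by
  intro x y h
  funext j
  have : (x j : ℚ) = (y j : ℚ) := congrFun h j
  exact_mod_cast this

noncomputable def lam (b : Fin d → (Fin N → ℤ)) (g : Fin N → ℤ) : Fin d → ℚ :=
  if h : ∃ c : Fin d → ℚ, qc g = ∑ i, c i • qc (b i) then h.choose else 0

lemma lam_spec (b : Fin d → (Fin N → ℤ)) {g : Fin N → ℤ}
    (h : ∃ c : Fin d → ℚ, qc g = ∑ i, c i • qc (b i)) :
    qc g = ∑ i, lam b g i • qc (b i) := by
  rw [lam, dif_pos h]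
  exact h.choose_spec

lemma lam_unique {b : Fin d → (Fin N → ℤ)}
    (hli : LinearIndependent ℚ (fun i : Fin d => (fun j : Fin N => ((b i j : ℚ)))))
    {g : Fin N → ℤ} {c : Fin d → ℚ} (hc : qc g = ∑ i, c i • qc (b i)) :
    lam b g = c := by
  have h2 := lam_spec b ⟨c, hc⟩
  have h3 : ∑ i, (lam b g i - c i) • (fun j : Fin N => ((b i j : ℚ))) = 0 := by
    have : ∑ i, (lam b g i - c i) • qc (b i) = 0 := by
      simp only [sub_smul, Finset.sum_sub_distrib, ← h2, ← hc, sub_self]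
    exact this
  funext i
  have := Fintype.linearIndependent_iff.mp hli _ h3 i
  linarith

end Infra

section Coord

variable {N d : ℕ} {H : AddSubmonoid (Fin N → ℤ)} {b : Fin d → (Fin N → ℤ)} {n : ℕ}

lemma mem_G_iff {g : Fin N → ℤ} :
    g ∈ AddSubgroup.closure (H : Set (Fin N → ℤ)) ↔ ∃ x ∈ H, ∃ y ∈ H, g = x - y := by
  constructor
  · intro hg
    let S : AddSubgroup (Fin N → ℤ) :=
      { carrier := {g | ∃ x ∈ H, ∃ y ∈ H, g = x - y}
        zero_mem' := ⟨0, H.zero_mem, 0, H.zero_mem, by simp⟩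
        add_mem' := by
          rintro u v ⟨x, hx, y, hy, rfl⟩ ⟨x', hx', y', hy', rfl⟩
          exact ⟨x + x', H.add_mem hx hx', y + y', H.add_mem hy hy', by abel⟩
        neg_mem' := by
          rintro u ⟨x, hx, y, hy, rfl⟩
          exact ⟨y, hy, x, hx, by abel⟩ }
    have hle : AddSubgroup.closure (H : Set (Fin N → ℤ)) ≤ S :=
      (AddSubgroup.closure_le S).mpr (fun x hx => ⟨x, hx, 0, H.zero_mem, by simp⟩)
    exact hle hg
  · rintro ⟨x, hx, y, hy, rfl⟩
    exact sub_mem (AddSubgroup.subset_closure hx) (AddSubgroup.subset_closure hy)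

/-- The coordinates of an `H`-element are of the form `c i / n` with `c i : ℕ`. -/
lemma lam_of_H (hli : LinearIndependent ℚ (fun i : Fin d => (fun j : Fin N => ((b i j : ℚ)))))
    (hn : 0 < n) (hnx : ∀ x ∈ H, ∃ c : Fin d → ℕ, (n : ℤ) • x = ∑ i, (c i : ℤ) • b i)
    {x : Fin N → ℤ} (hx : x ∈ H) :
    (qc x = ∑ i, lam b x i • qc (b i)) ∧
      ∃ c : Fin d → ℕ, lam b x = fun i => (c i : ℚ) / (n : ℚ) := by
  obtain ⟨c, hc⟩ := hnx x hx
  have hn0 : (n : ℚ) ≠ 0 := by positivity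
  have h1 : (n : ℚ) • qc x = ∑ i, ((c i : ℚ)) • qc (b i) := by
    have h0 := congrArg qc hc
    simp only [map_zsmul, map_sum] at h0
    calc (n:ℚ) • qc x = ((n:ℤ) : ℚ) • qc x := by norm_num
    _ = (n:ℤ) • qc x := Int.cast_smul_eq_zsmul ℚ _ _
    _ = ∑ i, ((c i : ℤ)) • qc (b i) := h0
    _ = ∑ i, ((c i : ℚ)) • qc (b i) := by
          refine Finset.sum_congr rfl fun i _ => ?_
          rw [← Int.cast_smul_eq_zsmul ℚ]; norm_num
  have hq : qc x = ∑ i, ((c i : ℚ) / (n : ℚ)) • qc (b i) := by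
    have h2 := congrArg (fun v => (n : ℚ)⁻¹ • v) h1
    simp only [smul_smul, inv_mul_cancel₀ hn0, one_smul, Finset.smul_sum] at h2
    rw [h2]
    exact Finset.sum_congr rfl fun i _ => by rw [inv_mul_eq_div]
  exact ⟨lam_spec b ⟨_, hq⟩, c, lam_unique hli hq⟩

lemma lam_of_G (hli : LinearIndependent ℚ (fun i : Fin d => (fun j : Fin N => ((b i j : ℚ)))))
    (hn : 0 < n) (hnx : ∀ x ∈ H, ∃ c : Fin d → ℕ, (n : ℤ) • x = ∑ i, (c i : ℤ) • b i)
    {g : Fin N → ℤ} (hg : g ∈ AddSubgroup.closure (H : Set (Fin N → ℤ))) :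
    (qc g = ∑ i, lam b g i • qc (b i)) ∧
      ∃ z : Fin d → ℤ, lam b g = fun i => (z i : ℚ) / (n : ℚ) := by
  obtain ⟨x, hx, y, hy, rfl⟩ := mem_G_iff.mp hg
  obtain ⟨hxs, cx, hcx⟩ := lam_of_H hli hn hnx hx
  obtain ⟨hys, cy, hcy⟩ := lam_of_H hli hn hnx hy
  have hq : qc (x - y) = ∑ i, ((((cx i : ℤ) - (cy i : ℤ) : ℤ) : ℚ) / (n : ℚ)) • qc (b i) := by
    rw [map_sub, hxs, hys, ← Finset.sum_sub_distrib]
    refine Finset.sum_congr rfl fun i _ => ?_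
    rw [← sub_smul]
    congr 1
    rw [hcx, hcy]
    push_cast
    rw [div_sub_div_same]
  exact ⟨lam_spec b ⟨_, hq⟩, fun i => cx i - cy i, lam_unique hli hq⟩


lemma lam_sub (hli : LinearIndependent ℚ (fun i : Fin d => (fun j : Fin N => ((b i j : ℚ)))))
    (hn : 0 < n) (hnx : ∀ x ∈ H, ∃ c : Fin d → ℕ, (n : ℤ) • x = ∑ i, (c i : ℤ) • b i)
    {g g' : Fin N → ℤ} (hg : g ∈ AddSubgroup.closure (H : Set (Fin N → ℤ)))
    (hg' : g' ∈ AddSubgroup.closure (H : Set (Fin N → ℤ))) :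
    lam b (g - g') = lam b g - lam b g' := by
  have h1 := (lam_of_G hli hn hnx hg).1
  have h2 := (lam_of_G hli hn hnx hg').1
  refine lam_unique hli ?_
  rw [map_sub, h1, h2, ← Finset.sum_sub_distrib]
  exact Finset.sum_congr rfl fun i _ => by rw [Pi.sub_apply, sub_smul]

lemma lam_add (hli : LinearIndependent ℚ (fun i : Fin d => (fun j : Fin N => ((b i j : ℚ)))))
    (hn : 0 < n) (hnx : ∀ x ∈ H, ∃ c : Fin d → ℕ, (n : ℤ) • x = ∑ i, (c i : ℤ) • b i)
    {g g' : Fin N → ℤ} (hg : g ∈ AddSubgroup.closure (H : Set (Fin N → ℤ)))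
    (hg' : g' ∈ AddSubgroup.closure (H : Set (Fin N → ℤ))) :
    lam b (g + g') = lam b g + lam b g' := by
  have h1 := (lam_of_G hli hn hnx hg).1
  have h2 := (lam_of_G hli hn hnx hg').1
  refine lam_unique hli ?_
  rw [map_add, h1, h2, ← Finset.sum_add_distrib]
  exact Finset.sum_congr rfl fun i _ => by rw [Pi.add_apply, add_smul]

lemma lam_basis (hli : LinearIndependent ℚ (fun i : Fin d => (fun j : Fin N => ((b i j : ℚ)))))
    (k : Fin d) : lam b (b k) = fun i => if k = i then (1 : ℚ) else 0 := by
  refine lam_unique hli ?_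
  simp [ite_smul]

/-- membership criterion for normal `H`. -/
lemma mem_H_iff_lam (hli : LinearIndependent ℚ (fun i : Fin d => (fun j : Fin N => ((b i j : ℚ)))))
    (hn : 0 < n) (hnx : ∀ x ∈ H, ∃ c : Fin d → ℕ, (n : ℤ) • x = ∑ i, (c i : ℤ) • b i)
    (hnorm : IsNormalSg N H) (hbH : ∀ i, b i ∈ H)
    {g : Fin N → ℤ} (hg : g ∈ AddSubgroup.closure (H : Set (Fin N → ℤ))) :
    g ∈ H ↔ ∀ i, 0 ≤ lam b g i := by
  constructor
  · intro hgH i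
    obtain ⟨_, c, hc⟩ := lam_of_H hli hn hnx hgH
    rw [hc]
    positivity
  · intro hpos
    obtain ⟨hspec, z, hz⟩ := lam_of_G hli hn hnx hg
    have hzn : ∀ i, 0 ≤ z i := by
      intro i
      by_contra hneg
      push_neg at hneg
      have h1 : ((z i : ℤ) : ℚ) / (n : ℚ) < 0 :=
        div_neg_of_neg_of_pos (by exact_mod_cast hneg) (by positivity)
      have h2 := hpos i
      rw [hz] at h2
      simp only at h2
      linarith
    refine hnorm g hg ⟨n, hn, ?_⟩
    have key : n • g = ∑ i, (z i).toNat • b i := by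
      apply qc_inj
      rw [map_nsmul, map_sum, hspec, Finset.smul_sum]
      refine Finset.sum_congr rfl fun i _ => ?_
      rw [map_nsmul, ← Nat.cast_smul_eq_nsmul ℚ n, ← Nat.cast_smul_eq_nsmul ℚ ((z i).toNat),
        smul_smul, hz]
      congr 1
      have h2 : ((z i).toNat : ℚ) = ((z i) : ℚ) := by exact_mod_cast Int.toNat_of_nonneg (hzn i)
      simp only [h2]
      field_simp
    rw [key]
    exact AddSubmonoid.sum_mem H (fun i _ => AddSubmonoid.nsmul_mem H (hbH i) _)


lemma lam_of_rep (hli : LinearIndependent ℚ (fun i : Fin d => (fun j : Fin N => ((b i j : ℚ)))))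
    (hn : 0 < n) {x : Fin N → ℤ} {c : Fin d → ℕ}
    (hc : (n : ℤ) • x = ∑ i, (c i : ℤ) • b i) :
    lam b x = fun i => (c i : ℚ) / (n : ℚ) := by
  have hn0 : (n : ℚ) ≠ 0 := by positivity
  refine lam_unique hli ?_
  have h1 : (n : ℚ) • qc x = ∑ i, ((c i : ℚ)) • qc (b i) := by
    have h0 := congrArg qc hc
    simp only [map_zsmul, map_sum] at h0
    calc (n:ℚ) • qc x = ((n:ℤ) : ℚ) • qc x := by norm_num
    _ = (n:ℤ) • qc x := Int.cast_smul_eq_zsmul ℚ _ _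
    _ = ∑ i, ((c i : ℤ)) • qc (b i) := h0
    _ = ∑ i, ((c i : ℚ)) • qc (b i) := by
          refine Finset.sum_congr rfl fun i _ => ?_
          rw [← Int.cast_smul_eq_zsmul ℚ]; norm_num
  have h2 := congrArg (fun v => (n : ℚ)⁻¹ • v) h1
  simp only [smul_smul, inv_mul_cancel₀ hn0, one_smul, Finset.smul_sum] at h2
  rw [h2]
  exact Finset.sum_congr rfl fun i _ => by rw [inv_mul_eq_div]

lemma int_indep (hli : LinearIndependent ℚ (fun i : Fin d => (fun j : Fin N => ((b i j : ℚ)))))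
    {c : Fin d → ℤ} (hc : ∑ i, c i • b i = 0) : ∀ i, c i = 0 := by
  have h1 : ∑ i, ((c i : ℚ)) • (fun j : Fin N => ((b i j : ℚ))) = 0 := by
    have h0 := congrArg qc hc
    rw [map_sum, map_zero] at h0
    rw [← h0]
    refine Finset.sum_congr rfl fun i _ => ?_
    exact (Int.cast_smul_eq_zsmul ℚ _ _).trans (map_zsmul qc _ _).symm
  intro i
  exact_mod_cast Fintype.linearIndependent_iff.mp hli _ h1 i

lemma mem_apery_iff (hli : LinearIndependent ℚ (fun i : Fin d => (fun j : Fin N => ((b i j : ℚ)))))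
    (hn : 0 < n) (hnx : ∀ x ∈ H, ∃ c : Fin d → ℕ, (n : ℤ) • x = ∑ i, (c i : ℤ) • b i)
    (hnorm : IsNormalSg N H) (hbH : ∀ i, b i ∈ H)
    {g : Fin N → ℤ} (hg : g ∈ AddSubgroup.closure (H : Set (Fin N → ℤ))) :
    g ∈ aperyG H b ↔ (∀ i, 0 ≤ lam b g i) ∧ (∀ i, lam b g i < 1) := by
  constructor
  · rintro ⟨hgH, hap⟩
    have h0 := (mem_H_iff_lam hli hn hnx hnorm hbH hg).mp hgH
    refine ⟨h0, fun k => ?_⟩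
    by_contra hge
    push_neg at hge
    apply hap k
    have hbkG : b k ∈ AddSubgroup.closure (H : Set (Fin N → ℤ)) :=
      AddSubgroup.subset_closure (hbH k)
    refine (mem_H_iff_lam hli hn hnx hnorm hbH (sub_mem hg hbkG)).mpr ?_
    intro i
    rw [lam_sub hli hn hnx hg hbkG, Pi.sub_apply]
    have hb : lam b (b k) i = if k = i then 1 else 0 := by rw [lam_basis hli k]
    by_cases hik : k = i
    · rw [hb, if_pos hik]; subst hik; linarith
    · rw [hb, if_neg hik]; simpa using h0 i
  · rintro ⟨h0, h1⟩
    refine ⟨(mem_H_iff_lam hli hn hnx hnorm hbH hg).mpr h0, fun k hk => ?_⟩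
    have hbkG : b k ∈ AddSubgroup.closure (H : Set (Fin N → ℤ)) :=
      AddSubgroup.subset_closure (hbH k)
    have h2 := (mem_H_iff_lam hli hn hnx hnorm hbH (sub_mem hg hbkG)).mp hk k
    have hb : lam b (b k) k = if k = k then 1 else 0 := by rw [lam_basis hli k]
    rw [lam_sub hli hn hnx hg hbkG] at h2
    rw [Pi.sub_apply, hb, if_pos rfl] at h2
    linarith [h1 k]

lemma reduced (hli : LinearIndependent ℚ (fun i : Fin d => (fun j : Fin N => ((b i j : ℚ)))))
    (hn : 0 < n) (hnx : ∀ x ∈ H, ∃ c : Fin d → ℕ, (n : ℤ) • x = ∑ i, (c i : ℤ) • b i)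
    {x y : Fin N → ℤ} (hx : x ∈ H) (hy : y ∈ H) (hxy : x + y = 0) : x = 0 := by
  obtain ⟨hxs, cx, hcx⟩ := lam_of_H hli hn hnx hx
  obtain ⟨hys, cy, hcy⟩ := lam_of_H hli hn hnx hy
  have hsum : ∑ i, (lam b x i + lam b y i) • (fun j : Fin N => ((b i j : ℚ))) = 0 := by
    have h0 : ∑ i, (lam b x i + lam b y i) • qc (b i) = 0 := by
      simp only [add_smul, Finset.sum_add_distrib, ← hxs, ← hys, ← map_add, hxy, map_zero]
    exact h0
  have hz := Fintype.linearIndependent_iff.mp hli _ hsum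
  have hlx : ∀ i, lam b x i = 0 := by
    intro i
    have h1 : 0 ≤ lam b x i := by rw [hcx]; positivity
    have h2 : 0 ≤ lam b y i := by rw [hcy]; positivity
    have := hz i
    linarith
  apply qc_inj
  rw [map_zero, hxs]
  simp [hlx]

lemma apery_coeff_lt (hli : LinearIndependent ℚ (fun i : Fin d => (fun j : Fin N => ((b i j : ℚ)))))
    (hn : 0 < n) (hnx : ∀ x ∈ H, ∃ c : Fin d → ℕ, (n : ℤ) • x = ∑ i, (c i : ℤ) • b i)
    (hnorm : IsNormalSg N H) (hbH : ∀ i, b i ∈ H)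
    {x : Fin N → ℤ} (hx : x ∈ aperyG H b) {c : Fin d → ℕ}
    (hc : (n : ℤ) • x = ∑ i, (c i : ℤ) • b i) : ∀ i, c i < n := by
  intro i
  have hxG : x ∈ AddSubgroup.closure (H : Set (Fin N → ℤ)) := AddSubgroup.subset_closure hx.1
  have hap := (mem_apery_iff hli hn hnx hnorm hbH hxG).mp hx
  have hlam := lam_of_rep hli hn hc
  have := hap.2 i
  rw [hlam] at this
  simp only at this
  rw [div_lt_one (by positivity)] at this
  exact_mod_cast this

lemma apery_coeff_sum_le
    (hli : LinearIndependent ℚ (fun i : Fin d => (fun j : Fin N => ((b i j : ℚ)))))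
    (hn : 0 < n) (hnx : ∀ x ∈ H, ∃ c : Fin d → ℕ, (n : ℤ) • x = ∑ i, (c i : ℤ) • b i)
    (hnorm : IsNormalSg N H) (hbH : ∀ i, b i ∈ H)
    {x : Fin N → ℤ} (hx : x ∈ aperyG H b) {c : Fin d → ℕ}
    (hc : (n : ℤ) • x = ∑ i, (c i : ℤ) • b i) : ∑ i, c i ≤ n * d := by
  have hlt := apery_coeff_lt hli hn hnx hnorm hbH hx hc
  calc ∑ i, c i ≤ ∑ _i : Fin d, (n - 1) :=
        Finset.sum_le_sum (fun i _ => Nat.le_sub_one_of_lt (hlt i))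
  _ = d * (n - 1) := by simp [Finset.sum_const, Finset.card_univ, Nat.smul_one_eq_cast]
  _ ≤ d * n := Nat.mul_le_mul_left d (Nat.sub_le n 1)
  _ = n * d := Nat.mul_comm d n

lemma exists_soc_above
    (hli : LinearIndependent ℚ (fun i : Fin d => (fun j : Fin N => ((b i j : ℚ)))))
    (hn : 0 < n) (hnx : ∀ x ∈ H, ∃ c : Fin d → ℕ, (n : ℤ) • x = ∑ i, (c i : ℤ) • b i)
    (hnorm : IsNormalSg N H) (hbH : ∀ i, b i ∈ H)
    {h : Fin N → ℤ} (hh : h ∈ aperyG H b) :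
    ∃ g ∈ socG H b, g - h ∈ H := by
  suffices key : ∀ k : ℕ, ∀ h ∈ aperyG H b, ∀ c : Fin d → ℕ,
      ((n : ℤ) • h = ∑ i, (c i : ℤ) • b i) → (∑ i, c i) + k = n * d →
      ∃ g ∈ socG H b, g - h ∈ H by
    obtain ⟨c, hc⟩ := hnx h hh.1
    obtain ⟨k, hk⟩ := Nat.le.dest (apery_coeff_sum_le hli hn hnx hnorm hbH hh hc)
    exact key k h hh c hc hk
  intro k
  induction k using Nat.strong_induction_on with
  | _ k IH =>
    intro h hh c hc hk
    by_cases hsoc : h ∈ socG H b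
    · exact ⟨h, hsoc, by rw [sub_self]; exact H.zero_mem⟩
    · have hex : ∃ y ∈ aperyG H b, y - h ∈ H ∧ h ≠ y := by
        by_contra hcon
        push_neg at hcon
        exact hsoc ⟨hh, fun y hy hyh => hcon y hy hyh⟩
      obtain ⟨y, hy, hyh, hne⟩ := hex
      obtain ⟨c', hc'⟩ := hnx y hy.1
      obtain ⟨e, he⟩ := hnx (y - h) hyh
      have hce : ∀ i, (c' i : ℤ) = (c i : ℤ) + (e i : ℤ) := by
        have h0 : ∑ i, ((c' i : ℤ) - (c i : ℤ) - (e i : ℤ)) • b i = 0 := by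
          calc ∑ i, ((c' i : ℤ) - (c i : ℤ) - (e i : ℤ)) • b i
              = ∑ i, ((c' i : ℤ) • b i - (c i : ℤ) • b i - (e i : ℤ) • b i) := by
                refine Finset.sum_congr rfl fun i _ => ?_
                rw [sub_smul, sub_smul]
          _ = (∑ i, (c' i : ℤ) • b i) - (∑ i, (c i : ℤ) • b i) - (∑ i, (e i : ℤ) • b i) := by
                rw [Finset.sum_sub_distrib, Finset.sum_sub_distrib]
          _ = 0 := by
                rw [← hc, ← hc', ← he, smul_sub]
                abel
        intro i
        have := int_indep hli h0 i
        linarith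
      have hepos : 0 < ∑ i, e i := by
        rcases Nat.eq_zero_or_pos (∑ i, e i) with h0 | h0
        · exfalso
          have he0 : ∀ i, e i = 0 := by
            intro i
            have := Finset.sum_eq_zero_iff.mp h0 i (Finset.mem_univ i)
            exact this
          have hz : (n : ℤ) • (y - h) = 0 := by
            rw [he]
            refine Finset.sum_eq_zero fun i _ => ?_
            rw [he0 i]
            simp
          have : y - h = 0 := by
            rcases smul_eq_zero.mp hz with h1 | h1
            · exact absurd h1 (by exact_mod_cast hn.ne')
            · exact h1
          exact hne (by rw [← sub_eq_zero, show h - y = -(y - h) from by abel, this, neg_zero])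
        · exact h0
      have hsum_lt : ∑ i, c i < ∑ i, c' i := by
        have h1 : (∑ i, (c' i : ℤ)) = ∑ i, ((c i : ℤ) + (e i : ℤ)) :=
          Finset.sum_congr rfl fun i _ => hce i
        rw [Finset.sum_add_distrib] at h1
        have h2 : ∑ i, c' i = ∑ i, c i + ∑ i, e i := by exact_mod_cast h1
        omega
      obtain ⟨k', hk'⟩ := Nat.le.dest (apery_coeff_sum_le hli hn hnx hnorm hbH hy hc')
      have hkk : k' < k := by
        have := hk.trans hk'.symm
        omega
      obtain ⟨g, hgs, hgy⟩ := IH k' hkk y hy c' hc' hk'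
      refine ⟨g, hgs, ?_⟩
      have := H.add_mem hgy hyh
      rwa [show g - y + (y - h) = g - h from by abel] at this


lemma witness_of_cond
    (hli : LinearIndependent ℚ (fun i : Fin d => (fun j : Fin N => ((b i j : ℚ)))))
    (hn : 0 < n) (hnx : ∀ x ∈ H, ∃ c : Fin d → ℕ, (n : ℤ) • x = ∑ i, (c i : ℤ) • b i)
    (hnorm : IsNormalSg N H) (hbH : ∀ i, b i ∈ H)
    {w : Fin N → ℤ} (hw : w ∈ socG H b)
    (hcond : ∀ h ∈ socG H b, h ≠ w → ∃ i : Fin d, ∃ h' ∈ socG H b, h + h' = w + b i) :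
    AGwitnessG H b w := by
  refine ⟨hw, ?_, hcond⟩
  intro h hh
  constructor
  · rintro ⟨hhs, hne⟩ hwh
    exact hne (hhs.2 w hw.1 hwh)
  · intro hwh
    have hne : h ≠ w := by
      rintro rfl
      exact hwh (by rw [sub_self]; exact H.zero_mem)
    refine ⟨?_, hne⟩
    have hhG : h ∈ AddSubgroup.closure (H : Set (Fin N → ℤ)) := AddSubgroup.subset_closure hh.1
    have hwG : w ∈ AddSubgroup.closure (H : Set (Fin N → ℤ)) := AddSubgroup.subset_closure hw.1.1
    have hwhG : w - h ∈ AddSubgroup.closure (H : Set (Fin N → ℤ)) := sub_mem hwG hhG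
    have haph := (mem_apery_iff hli hn hnx hnorm hbH hhG).mp hh
    have hapw := (mem_apery_iff hli hn hnx hnorm hbH hwG).mp hw.1
    have hex : ∃ i, lam b w i < lam b h i := by
      by_contra hcon
      push_neg at hcon
      apply hwh
      refine (mem_H_iff_lam hli hn hnx hnorm hbH hwhG).mpr ?_
      intro i
      rw [lam_sub hli hn hnx hwG hhG, Pi.sub_apply]
      linarith [hcon i]
    obtain ⟨i, hi⟩ := hex
    -- Step 1: every other coordinate of h is at most that of w
    have step1 : ∀ j, j ≠ i → lam b h j ≤ lam b w j := by
      intro j hj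
      obtain ⟨g, hgs, hgh⟩ := exists_soc_above hli hn hnx hnorm hbH hh
      have hgG : g ∈ AddSubgroup.closure (H : Set (Fin N → ℤ)) :=
        AddSubgroup.subset_closure hgs.1.1
      have hge : ∀ m, lam b h m ≤ lam b g m := by
        intro m
        have h1 := (mem_H_iff_lam hli hn hnx hnorm hbH (sub_mem hgG hhG)).mp hgh m
        rw [lam_sub hli hn hnx hgG hhG, Pi.sub_apply] at h1
        linarith
      have hgw : g ≠ w := by
        rintro rfl
        linarith [hge i]
      obtain ⟨k, h', hh's, hsumeq⟩ := hcond g hgs hgw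
      have hh'G : h' ∈ AddSubgroup.closure (H : Set (Fin N → ℤ)) :=
        AddSubgroup.subset_closure hh's.1.1
      have hcoord : ∀ m, lam b g m + lam b h' m = lam b w m + (if k = m then 1 else 0) := by
        intro m
        have h1 := congrArg (lam b) hsumeq
        rw [lam_add hli hn hnx hgG hh'G,
          lam_add hli hn hnx hwG (AddSubgroup.subset_closure (hbH k)), lam_basis hli k] at h1
        have h2 := congrFun h1 m
        simpa using h2
      have hh'ap := (mem_apery_iff hli hn hnx hnorm hbH hh'G).mp hh's.1
      have hki : k = i := by
        by_contra hk
        have h2 := hcoord i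
        rw [if_neg hk] at h2
        have h3 := hh'ap.1 i
        linarith [hge i]
      subst hki
      have h2 := hcoord j
      rw [if_neg (fun e => hj e.symm)] at h2
      have h3 := hh'ap.1 j
      linarith [hge j]
    -- Step 2: t = w + b i - h is in the Apery set
    set t := w + b i - h with ht
    have hbiG : b i ∈ AddSubgroup.closure (H : Set (Fin N → ℤ)) :=
      AddSubgroup.subset_closure (hbH i)
    have htG : t ∈ AddSubgroup.closure (H : Set (Fin N → ℤ)) := sub_mem (add_mem hwG hbiG) hhG
    have hlt : ∀ m, lam b t m = lam b w m + (if i = m then 1 else 0) - lam b h m := by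
      intro m
      rw [ht, lam_sub hli hn hnx (add_mem hwG hbiG) hhG,
        lam_add hli hn hnx hwG hbiG, lam_basis hli i]
      simp
    have htap : t ∈ aperyG H b := by
      refine (mem_apery_iff hli hn hnx hnorm hbH htG).mpr ⟨?_, ?_⟩
      · intro m
        rw [hlt m]
        by_cases him : i = m
        · rw [if_pos him]
          subst him
          linarith [haph.2 i, hapw.1 i]
        · rw [if_neg him]
          have := step1 m (fun e => him e.symm)
          linarith
      · intro m
        rw [hlt m]
        by_cases him : i = m
        · rw [if_pos him]
          subst him
          linarith [hi]
        · rw [if_neg him]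
          linarith [hapw.2 m, haph.1 m]
    -- Step 3: pick a socle element above t and use the condition
    obtain ⟨g, hgs, hgt⟩ := exists_soc_above hli hn hnx hnorm hbH htap
    have hgG : g ∈ AddSubgroup.closure (H : Set (Fin N → ℤ)) :=
      AddSubgroup.subset_closure hgs.1.1
    have hge : ∀ m, lam b t m ≤ lam b g m := by
      intro m
      have h1 := (mem_H_iff_lam hli hn hnx hnorm hbH (sub_mem hgG htG)).mp hgt m
      rw [lam_sub hli hn hnx hgG htG, Pi.sub_apply] at h1
      linarith
    have hgi : lam b w i < lam b g i := by
      have h1 := hge i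
      rw [hlt i, if_pos rfl] at h1
      linarith [haph.2 i]
    have hgw : g ≠ w := by
      rintro rfl
      linarith
    obtain ⟨k, g', hg's, hsumeq⟩ := hcond g hgs hgw
    have hg'G : g' ∈ AddSubgroup.closure (H : Set (Fin N → ℤ)) :=
      AddSubgroup.subset_closure hg's.1.1
    have hcoord : ∀ m, lam b g m + lam b g' m = lam b w m + (if k = m then 1 else 0) := by
      intro m
      have h1 := congrArg (lam b) hsumeq
      rw [lam_add hli hn hnx hgG hg'G,
        lam_add hli hn hnx hwG (AddSubgroup.subset_closure (hbH k)), lam_basis hli k] at h1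
      have h2 := congrFun h1 m
      simpa using h2
    have hg'ap := (mem_apery_iff hli hn hnx hnorm hbH hg'G).mp hg's.1
    have hki : k = i := by
      by_contra hk
      have h2 := hcoord i
      rw [if_neg hk] at h2
      have h3 := hg'ap.1 i
      linarith
    subst hki
    have hgeq : h - g' = g - t := by
      rw [ht]
      linear_combination -hsumeq
    have hmem : h - g' ∈ H := by rw [hgeq]; exact hgt
    have hfin := hg's.2 h hh hmem
    rw [← hfin]
    exact hg's


lemma minGen_iff (hli : LinearIndependent ℚ (fun i : Fin d => (fun j : Fin N => ((b i j : ℚ)))))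
    (hn : 0 < n) (hnx : ∀ x ∈ H, ∃ c : Fin d → ℕ, (n : ℤ) • x = ∑ i, (c i : ℤ) • b i)
    (x : Fin N → ℤ) :
    minGenG H b x ↔ ∃ w ∈ socG H b, x = (∑ l, b l) - w := by
  constructor
  · rintro ⟨⟨w, hws, h, hh, rfl⟩, hmin⟩
    refine ⟨w, hws, ?_⟩
    by_cases hh0 : h = 0
    · subst hh0; abel
    · exact absurd (⟨w, hws, 0, H.zero_mem, by abel⟩ :
        -w + (∑ i, b i) + h - h ∈ omegaG H b) (hmin h hh hh0)
  · rintro ⟨w, hws, rfl⟩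
    constructor
    · exact ⟨w, hws, 0, H.zero_mem, by abel⟩
    · rintro h hh hh0 ⟨w', hw's, h', hh', heq⟩
      have h1 : w' - w = h + h' := by linear_combination heq
      have h2 : w = w' := hws.2 w' hw's.1 (h1 ▸ H.add_mem hh hh')
      apply hh0
      refine reduced hli hn hnx hh hh' ?_
      rw [← h1, ← h2, sub_self]

end Coord

/-- For a normal Cohen–Macaulay simplicial semigroup `(H,E)` whose
canonical ideal `ω_H` has minimal generators `a₁, …, a_s`: `H` is an AG semigroup iff
there is `i` such that for every `j ≠ i` there exist `j'` and `b ∈ E` with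
`a_j + a_{j'} = a_i + Σ_{h ∈ E\{b}} h`; in that case `a_i` is an Ulrich element, i.e.
`a_i = Σ_{b ∈ E} b - w` for an AG witness `w`.  When the rank is `2` the condition reads
`a_j + a_{j'} = a_i + b` for some `b ∈ E`. -/
theorem normal_AG_criterion {N d : ℕ}
    (H : AddSubmonoid (Fin N → ℤ)) (b : Fin d → (Fin N → ℤ))
    (hH : IsSimplicial N d H b) (hnorm : IsNormalSg N H) (hCM : CMG H b)
    {s : ℕ} (hs : 1 ≤ s) (a : Fin s → (Fin N → ℤ)) (hinj : Function.Injective a)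
    (hgen : Set.range a = {x | minGenG H b x}) :
    ((∃ w, AGwitnessG H b w) ↔
      ∃ i : Fin s, ∀ j : Fin s, j ≠ i → ∃ (j' : Fin s) (l : Fin d),
        a j + a j' = a i + ∑ l' ∈ Finset.univ.erase l, b l') ∧
    (∀ i : Fin s,
      (∀ j : Fin s, j ≠ i → ∃ (j' : Fin s) (l : Fin d),
        a j + a j' = a i + ∑ l' ∈ Finset.univ.erase l, b l') →
      ∃ w, AGwitnessG H b w ∧ a i = (∑ l, b l) - w) ∧
    (d = 2 →
      ((∃ w, AGwitnessG H b w) ↔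
        ∃ i : Fin s, ∀ j : Fin s, j ≠ i → ∃ (j' : Fin s) (l : Fin d),
          a j + a j' = a i + b l)) := by
  obtain ⟨hFG, hbH, hli, n, hn, hnx⟩ := hH
  have ha_min : ∀ j, minGenG H b (a j) := by
    intro j
    have h1 : a j ∈ Set.range a := ⟨j, rfl⟩
    rw [hgen] at h1
    exact h1
  have hrange : ∀ x, minGenG H b x → ∃ j, a j = x := by
    intro x hx
    have h1 : x ∈ Set.range a := by rw [hgen]; exact hx
    exact h1
  have herase : ∀ l : Fin d, ∑ l' ∈ Finset.univ.erase l, b l' = (∑ l', b l') - b l := by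
    intro l
    have h1 := Finset.sum_erase_add Finset.univ b (Finset.mem_univ l)
    linear_combination h1
  have part2 : ∀ i : Fin s,
      (∀ j : Fin s, j ≠ i → ∃ (j' : Fin s) (l : Fin d),
        a j + a j' = a i + ∑ l' ∈ Finset.univ.erase l, b l') →
      ∃ w, AGwitnessG H b w ∧ a i = (∑ l, b l) - w := by
    intro i hi
    obtain ⟨w, hws, haiw⟩ := (minGen_iff hli hn hnx (a i)).mp (ha_min i)
    refine ⟨w, witness_of_cond hli hn hnx hnorm hbH hws ?_, haiw⟩
    intro h hhs hne
    obtain ⟨j, haj⟩ := hrange _ ((minGen_iff hli hn hnx _).mpr ⟨h, hhs, rfl⟩)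
    have hji : j ≠ i := by
      rintro rfl
      exact hne (sub_right_injective (haj.symm.trans haiw))
    obtain ⟨j', l, hsum⟩ := hi j hji
    obtain ⟨h', hh's, haj'⟩ := (minGen_iff hli hn hnx (a j')).mp (ha_min j')
    refine ⟨l, h', hh's, ?_⟩
    rw [haj, haj', haiw, herase l] at hsum
    linear_combination -hsum
  have main1 : (∃ w, AGwitnessG H b w) ↔
      ∃ i : Fin s, ∀ j : Fin s, j ≠ i → ∃ (j' : Fin s) (l : Fin d),
        a j + a j' = a i + ∑ l' ∈ Finset.univ.erase l, b l' := by
    constructor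
    · rintro ⟨w, hwit⟩
      obtain ⟨i, hai⟩ := hrange _ ((minGen_iff hli hn hnx _).mpr ⟨w, hwit.1, rfl⟩)
      refine ⟨i, fun j hj => ?_⟩
      obtain ⟨wj, hwjs, hajw⟩ := (minGen_iff hli hn hnx (a j)).mp (ha_min j)
      have hwjw : wj ≠ w := by
        rintro rfl
        exact hj (hinj (hajw.trans hai.symm))
      obtain ⟨k, w', hw's, hsum⟩ := hwit.2.2 wj hwjs hwjw
      obtain ⟨j', haj'⟩ := hrange _ ((minGen_iff hli hn hnx _).mpr ⟨w', hw's, rfl⟩)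
      refine ⟨j', k, ?_⟩
      rw [hajw, haj', hai, herase k]
      linear_combination -hsum
    · rintro ⟨i, hi⟩
      obtain ⟨w, hw, _⟩ := part2 i hi
      exact ⟨w, hw⟩
  refine ⟨main1, part2, ?_⟩
  intro hd2
  subst hd2
  rw [main1]
  have h0 : Finset.univ.erase (0 : Fin 2) = {1} := by decide
  have h1 : Finset.univ.erase (1 : Fin 2) = {0} := by decide
  constructor
  · rintro ⟨i, hi⟩
    refine ⟨i, fun j hj => ?_⟩
    obtain ⟨j', l, hl⟩ := hi j hj
    fin_cases l
    · simp only [Fin.zero_eta, Fin.mk_one] at hl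
      rw [h0, Finset.sum_singleton] at hl
      exact ⟨j', 1, hl⟩
    · simp only [Fin.zero_eta, Fin.mk_one] at hl
      rw [h1, Finset.sum_singleton] at hl
      exact ⟨j', 0, hl⟩
  · rintro ⟨i, hi⟩
    refine ⟨i, fun j hj => ?_⟩
    obtain ⟨j', l, hl⟩ := hi j hj
    fin_cases l
    · simp only [Fin.zero_eta, Fin.mk_one] at hl
      exact ⟨j', 1, by rw [h1, Finset.sum_singleton]; exact hl⟩
    · simp only [Fin.zero_eta, Fin.mk_one] at hl
      exact ⟨j', 0, by rw [h0, Finset.sum_singleton]; exact hl⟩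


end AGpaper
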